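/- arXiv:1712.04846 — 5 statements merged into one kernel-verified Lean document; each statement's English description precedes it below -/
import Mathlib

section
/- Let n ≥ 2, let I ⊆ ℝ be an interval, and let ω: GL⁺(n) → I be twice continuously (Fréchet) differentiable. Suppose there exist F ∈ GL⁺(n) and vectors ξ, η ∈ ℝⁿ \ {0} such that Dω(F).(ξ⊗η) = 0 and D²ω(F).(ξ⊗η, ξ⊗η) < 0. Then there exists no strictly increasing function Ψ: I → ℝ such that the mapping F ↦ Ψ(ω(F)) is rank-one convex on GL⁺(n). -/
open Matrix Real

attribute [local instance] Matrix.frobeniusNormedAddCommGroup Matrix.frobeniusNormedSpace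

noncomputable section

/-- The space of real `n × n` matrices. -/
abbrev Mat (n : ℕ) := Matrix (Fin n) (Fin n) ℝ

/-- `GL⁺(n)`: real `n × n` matrices with positive determinant. -/
def GLp (n : ℕ) : Set (Mat n) := {F | 0 < F.det}

/-- Frobenius inner product `⟨X, Y⟩ = tr (X Yᵀ)`. -/
def inn {n : ℕ} (X Y : Mat n) : ℝ := (X * Yᵀ).trace

/-- Squared Frobenius norm `‖X‖² = tr (Xᵀ X)`. -/
def nsq {n : ℕ} (X : Mat n) : ℝ := (Xᵀ * X).trace

/-- The primary matrix function associated to `f : ℝ → ℝ`: applies `f` to the eigenvalues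
in a spectral decomposition of a Hermitian (i.e. real symmetric) matrix, junk value `0`
otherwise. -/
def matFun {n : ℕ} (f : ℝ → ℝ) (A : Mat n) : Mat n :=
  if hA : A.IsHermitian then
    (hA.eigenvectorUnitary : Mat n) * Matrix.diagonal (f ∘ hA.eigenvalues) *
      (star (hA.eigenvectorUnitary : Mat n))
  else 0

/-- Principal square root of a symmetric positive semidefinite matrix. -/
def matSqrt {n : ℕ} (A : Mat n) : Mat n := matFun Real.sqrt A

/-- Principal matrix logarithm of a symmetric positive definite matrix. -/
def matLog {n : ℕ} (A : Mat n) : Mat n := matFun Real.log A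

/-- `log U` where `U = √(FᵀF)` is the right stretch tensor of `F`. -/
def logU {n : ℕ} (F : Mat n) : Mat n := matLog (matSqrt (Fᵀ * F))

/-- `log V` where `V = √(FFᵀ)` is the left stretch tensor of `F`. -/
def logV {n : ℕ} (F : Mat n) : Mat n := matLog (matSqrt (F * Fᵀ))

/-- Deviatoric (trace-free) part `dev_n X = X - (tr X / n) 𝟙`. -/
def dev {n : ℕ} (X : Mat n) : Mat n := X - (X.trace / n) • (1 : Mat n)

/-- Rank-one convexity of `W : GL⁺(n) → ℝ`: along every rank-one line segment contained in
`GL⁺(n)`, the function is convex. -/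
def RankOneConvex {n : ℕ} (W : Mat n → ℝ) : Prop :=
  ∀ F ∈ GLp n, ∀ ξ η : Fin n → ℝ, ∀ I : Set ℝ, Convex ℝ I →
    (∀ t ∈ I, 0 < (F + t • vecMulVec ξ η).det) →
    ConvexOn ℝ I (fun t => W (F + t • vecMulVec ξ η))

end

/-- **Lemma 2.1 (impossibility lemma).** Let `n ≥ 2`, let `I ⊆ ℝ` be an interval and let
`ω : GL⁺(n) → I` be twice continuously differentiable. If there exist `F ∈ GL⁺(n)` and nonzero
vectors `ξ, η ∈ ℝⁿ` with `Dω(F).(ξ⊗η) = 0` and `D²ω(F).(ξ⊗η, ξ⊗η) < 0`, then there is no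
strictly increasing function `Ψ : I → ℝ` such that `F ↦ Ψ(ω(F))` is rank-one convex on `GL⁺(n)`. -/
theorem impossibility_lemma
    (n : ℕ) (hn : 2 ≤ n) (I : Set ℝ) (hI : Convex ℝ I)
    (ω : Mat n → ℝ) (hω : ContDiffOn ℝ 2 ω (GLp n))
    (hmaps : ∀ F ∈ GLp n, ω F ∈ I)
    (F : Mat n) (hF : F ∈ GLp n)
    (ξ η : Fin n → ℝ) (hξ : ξ ≠ 0) (hη : η ≠ 0)
    (h1 : fderiv ℝ ω F (vecMulVec ξ η) = 0)
    (h2 : fderiv ℝ (fun X => fderiv ℝ ω X (vecMulVec ξ η)) F (vecMulVec ξ η) < 0) :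
    ¬ ∃ Ψ : ℝ → ℝ, StrictMonoOn Ψ I ∧ RankOneConvex (fun X => Ψ (ω X)) := by

  rintro ⟨Ψ, hΨ, hroc⟩
  set M : Mat n := vecMulVec ξ η with hM
  set φ : ℝ → Mat n := fun t => F + t • M with hφdef
  have hφ : ∀ t : ℝ, HasDerivAt φ M t := by
    intro t
    have := ((hasDerivAt_id t).smul_const M).const_add F
    rw [one_smul] at this
    exact this
  have hφ0 : φ 0 = F := by simp [hφdef]
  have hopen : IsOpen (GLp n) := by
    have : GLp n = Matrix.det ⁻¹' Set.Ioi 0 := rfl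
    rw [this]
    exact isOpen_Ioi.preimage (Continuous.matrix_det continuous_id)
  have hφcont : Continuous φ := by
    exact continuous_const.add (continuous_id.smul continuous_const)
  have hs : IsOpen (φ ⁻¹' GLp n) := hopen.preimage hφcont
  have h0s : (0 : ℝ) ∈ φ ⁻¹' GLp n := by
    simpa [Set.mem_preimage, hφ0] using hF
  set g : ℝ → ℝ := fun t => ω (φ t) with hgdef
  set h : ℝ → ℝ := fun t => fderiv ℝ ω (φ t) M with hhdef
  have hgdiff : ∀ t ∈ φ ⁻¹' GLp n, HasDerivAt g (h t) t := by
    intro t ht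
    have hωd : DifferentiableAt ℝ ω (φ t) :=
      (hω.contDiffAt (hopen.mem_nhds ht)).differentiableAt two_ne_zero
    exact hωd.hasFDerivAt.comp_hasDerivAt t (hφ t)
  set D : Mat n → ℝ := fun X => fderiv ℝ ω X M with hDdef
  have hDdiff : DifferentiableAt ℝ D F := by
    have h2' : ContDiffAt ℝ 2 ω F := hω.contDiffAt (hopen.mem_nhds hF)
    have hfd := h2'.fderiv_right (m := 1) (by norm_num)
    exact (ContinuousLinearMap.apply ℝ ℝ M).differentiableAt.comp F
      (hfd.differentiableAt one_ne_zero)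
  have hh0 : HasDerivAt h (fderiv ℝ D F M) 0 := by
    have hD0 : HasFDerivAt D (fderiv ℝ D F) (φ 0) := hφ0 ▸ hDdiff.hasFDerivAt
    exact hD0.comp_hasDerivAt 0 (hφ 0)
  have hzero : h 0 = 0 := by simpa [hhdef, hφ0] using h1
  have hslope : Filter.Tendsto (slope h 0) (nhdsWithin 0 {(0:ℝ)}ᶜ)
      (nhds (fderiv ℝ D F M)) := hasDerivAt_iff_tendsto_slope.mp hh0
  have hev : ∀ᶠ t in nhdsWithin 0 {(0:ℝ)}ᶜ, slope h 0 t < 0 :=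
    hslope.eventually (gt_mem_nhds h2)
  have hmem : φ ⁻¹' GLp n ∈ nhds (0 : ℝ) := hs.mem_nhds h0s
  have hev2 : ∀ᶠ t in nhds (0:ℝ), t ∈ ({(0:ℝ)}ᶜ : Set ℝ) →
      slope h 0 t < 0 ∧ t ∈ φ ⁻¹' GLp n := by
    have h3 : ∀ᶠ t in nhdsWithin 0 {(0:ℝ)}ᶜ, slope h 0 t < 0 ∧ t ∈ φ ⁻¹' GLp n :=
      hev.and (eventually_nhdsWithin_of_eventually_nhds
        (Filter.eventually_of_mem hmem fun x hx => hx))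
    exact eventually_nhdsWithin_iff.mp h3
  rw [Metric.eventually_nhds_iff] at hev2
  obtain ⟨δ, hδ, hball⟩ := hev2
  set ε : ℝ := δ / 2 with hεdef
  have hε : 0 < ε := by positivity
  have hεδ : ε < δ := by
    rw [hεdef]; linarith
  have hin : ∀ t ∈ Set.Icc (-ε) ε, dist t (0:ℝ) < δ := by
    intro t ht
    rw [Real.dist_eq, sub_zero, abs_lt]
    constructor <;> [linarith [ht.1]; linarith [ht.2]]
  have key : ∀ t ∈ Set.Icc (-ε) ε, t ∈ φ ⁻¹' GLp n := by
    intro t ht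
    rcases eq_or_ne t 0 with rfl | hne
    · exact h0s
    · exact (hball (hin t ht) hne).2
  have hslope' : ∀ t ∈ Set.Icc (-ε) ε, t ≠ 0 → t⁻¹ * h t < 0 := by
    intro t ht hne
    have := (hball (hin t ht) hne).1
    simpa [slope, hzero] using this
  have hneg : ∀ t ∈ Set.Ioo (0:ℝ) ε, h t < 0 := by
    intro t ht
    have h1t := hslope' t ⟨by linarith [ht.1], le_of_lt ht.2⟩ (ne_of_gt ht.1)
    by_contra hc
    push_neg at hc
    exact absurd h1t (not_lt.mpr (mul_nonneg (le_of_lt (inv_pos.mpr ht.1)) hc))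
  have hpos : ∀ t ∈ Set.Ioo (-ε) (0:ℝ), 0 < h t := by
    intro t ht
    have h1t := hslope' t ⟨le_of_lt ht.1, by linarith [ht.2]⟩ (ne_of_lt ht.2)
    by_contra hc
    push_neg at hc
    have : 0 ≤ t⁻¹ * h t :=
      mul_nonneg_iff.mpr (Or.inr ⟨le_of_lt (inv_neg''.mpr ht.2), hc⟩)
    exact absurd h1t (not_lt.mpr this)
  -- g is strictly decreasing on [0, ε] and strictly increasing on [-ε, 0]
  have hsub1 : Set.Icc (0:ℝ) ε ⊆ Set.Icc (-ε) ε := by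
    intro t ht; exact ⟨by linarith [ht.1], ht.2⟩
  have hsub2 : Set.Icc (-ε) (0:ℝ) ⊆ Set.Icc (-ε) ε := by
    intro t ht; exact ⟨ht.1, by linarith [ht.2]⟩
  have hcont1 : ContinuousOn g (Set.Icc (0:ℝ) ε) := fun t ht =>
    ((hgdiff t (key t (hsub1 ht))).continuousAt).continuousWithinAt
  have hcont2 : ContinuousOn g (Set.Icc (-ε) (0:ℝ)) := fun t ht =>
    ((hgdiff t (key t (hsub2 ht))).continuousAt).continuousWithinAt
  have hanti : StrictAntiOn g (Set.Icc (0:ℝ) ε) := by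
    apply strictAntiOn_of_deriv_neg (convex_Icc _ _) hcont1
    intro t ht
    rw [interior_Icc] at ht
    rw [(hgdiff t (key t (hsub1 ⟨le_of_lt ht.1, le_of_lt ht.2⟩))).deriv]
    exact hneg t ht
  have hmono : StrictMonoOn g (Set.Icc (-ε) (0:ℝ)) := by
    apply strictMonoOn_of_deriv_pos (convex_Icc _ _) hcont2
    intro t ht
    rw [interior_Icc] at ht
    rw [(hgdiff t (key t (hsub2 ⟨le_of_lt ht.1, le_of_lt ht.2⟩))).deriv]
    exact hpos t ht
  have hg1 : g ε < g 0 :=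
    hanti ⟨le_refl _, le_of_lt hε⟩ ⟨le_of_lt hε, le_refl _⟩ hε
  have hg2 : g (-ε) < g 0 :=
    hmono ⟨le_refl _, by linarith⟩ ⟨by linarith, le_refl _⟩ (by linarith)
  -- apply rank-one convexity on [-ε, ε]
  have hdet : ∀ t ∈ Set.Icc (-ε) ε, 0 < (F + t • vecMulVec ξ η).det := by
    intro t ht
    exact key t ht
  have cvx := hroc F hF ξ η (Set.Icc (-ε) ε) (convex_Icc _ _) hdet
  have hmem1 : (-ε) ∈ Set.Icc (-ε) ε := ⟨le_refl _, by linarith⟩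
  have hmem2 : ε ∈ Set.Icc (-ε) ε := ⟨by linarith, le_refl _⟩
  have hle := cvx.2 hmem1 hmem2 (by norm_num : (0:ℝ) ≤ 1/2)
    (by norm_num : (0:ℝ) ≤ 1/2) (by norm_num)
  have hcomb : (1/2 : ℝ) • (-ε) + (1/2 : ℝ) • ε = 0 := by
    simp [smul_eq_mul]
  rw [hcomb] at hle
  -- finish: hle says Ψ (g 0) ≤ 1/2 Ψ (g (-ε)) + 1/2 Ψ (g ε)
  have hIn : ∀ t ∈ Set.Icc (-ε) ε, ω (φ t) ∈ I := fun t ht => hmaps _ (key t ht)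
  have hΨ1 : Ψ (g (-ε)) < Ψ (g 0) :=
    hΨ (hIn _ hmem1) (hIn 0 ⟨by linarith, by linarith⟩) hg2
  have hΨ2 : Ψ (g ε) < Ψ (g 0) :=
    hΨ (hIn _ hmem2) (hIn 0 ⟨by linarith, by linarith⟩) hg1
  have hle' : Ψ (g 0) ≤ (1/2 : ℝ) * Ψ (g (-ε)) + (1/2 : ℝ) * Ψ (g ε) := by
    simpa [hgdef, hφdef, smul_eq_mul] using hle
  linarith
end

section
/- Let Ψ: [0,∞) → ℝ be twice differentiable, monotone increasing and convex, and suppose Ψ''(s) ≥ (1/8)·Ψ'(s) for all s > 1. Then the function t ↦ Ψ((log t)²) is convex on (0,∞). -/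
open Real

/-- Auxiliary: the derivative within `Ici 0` of a function monotone on `Ici 0`
is nonnegative at every point of `Ici 0`. -/
lemma aux_deriv_nonneg_of_monotoneOn {f : ℝ → ℝ} {f' s : ℝ} (hs : (0 : ℝ) ≤ s)
    (hm : MonotoneOn f (Set.Ici 0)) (hd : HasDerivWithinAt f f' (Set.Ici 0) s) :
    0 ≤ f' := by
  have h := hasDerivWithinAt_iff_tendsto_slope.mp hd
  have hle : nhdsWithin s (Set.Ioi s) ≤ nhdsWithin s (Set.Ici (0:ℝ) \ {s}) := by
    apply nhdsWithin_mono
    intro y hy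
    exact ⟨le_trans hs (le_of_lt hy), ne_of_gt hy⟩
  have h2 : Filter.Tendsto (slope f s) (nhdsWithin s (Set.Ioi s)) (nhds f') :=
    h.mono_left hle
  refine ge_of_tendsto h2 ?_
  filter_upwards [self_mem_nhdsWithin] with y hy
  have hy' : s < y := hy
  have hfle : f s ≤ f y := hm hs (le_trans hs hy'.le) hy'.le
  rw [slope_def_field]
  exact div_nonneg (by linarith) (by linarith)

/-- If `Ψ : [0,∞) → ℝ` is twice differentiable, monotone increasing and convex, and
`Ψ''(s) ≥ (1/8) Ψ'(s)` for all `s > 1`, then `t ↦ Ψ((log t)²)` is convex on `(0,∞)`.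
Here the derivatives of `Ψ` on `[0,∞)` are encoded by functions `Ψ'` and `Ψ''`. -/
theorem convexification_of_log_sq
    (Ψ Ψ' Ψ'' : ℝ → ℝ)
    (hd1 : ∀ s ∈ Set.Ici (0 : ℝ), HasDerivWithinAt Ψ (Ψ' s) (Set.Ici 0) s)
    (hd2 : ∀ s ∈ Set.Ici (0 : ℝ), HasDerivWithinAt Ψ' (Ψ'' s) (Set.Ici 0) s)
    (hmono : MonotoneOn Ψ (Set.Ici 0))
    (hconv : ConvexOn ℝ (Set.Ici 0) Ψ)
    (hineq : ∀ s : ℝ, 1 < s → (1 / 8) * Ψ' s ≤ Ψ'' s) :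
    ConvexOn ℝ (Set.Ioi (0 : ℝ)) (fun t : ℝ => Ψ ((Real.log t) ^ 2)) := by
  -- Ψ' is nonnegative on [0,∞)
  have hΨ'nonneg : ∀ s : ℝ, 0 ≤ s → 0 ≤ Ψ' s := fun s hs =>
    aux_deriv_nonneg_of_monotoneOn hs hmono (hd1 s hs)
  -- Ψ' is monotone on [0,∞)
  have hΨ'mono : MonotoneOn Ψ' (Set.Ici 0) := by
    intro x hx y hy hxy
    rcases eq_or_lt_of_le hxy with rfl | hlt
    · exact le_rfl
    · have h1 : Ψ' x ≤ slope Ψ x y :=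
        hconv.le_slope_of_hasDerivWithinAt hx hy hlt (hd1 x hx)
      have h2 : slope Ψ x y ≤ Ψ' y :=
        hconv.slope_le_of_hasDerivWithinAt hx hy hlt (hd1 y hy)
      linarith
  -- Ψ'' is nonnegative on [0,∞)
  have hΨ''nonneg : ∀ s : ℝ, 0 ≤ s → 0 ≤ Ψ'' s := fun s hs =>
    aux_deriv_nonneg_of_monotoneOn hs hΨ'mono (hd2 s hs)
  -- set up derivatives
  set g : ℝ → ℝ := fun t => (Real.log t) ^ 2 with hg
  have hmaps : ∀ t : ℝ, g t ∈ Set.Ici (0:ℝ) := fun t => show (0:ℝ) ≤ (Real.log t) ^ 2 from sq_nonneg _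
  have hgd : ∀ t : ℝ, t ∈ Set.Ioi (0:ℝ) →
      HasDerivAt g (2 * Real.log t / t) t := by
    intro t ht
    have := (Real.hasDerivAt_log (ne_of_gt ht)).pow 2
    refine this.congr_deriv ?_
    have : (t:ℝ) ≠ 0 := ne_of_gt ht
    field_simp
    norm_num
  refine convexOn_of_hasDerivWithinAt2_nonneg (convex_Ioi 0)
    (f' := fun t => Ψ' (g t) * (2 * Real.log t / t))
    (f'' := fun t => Ψ'' (g t) * (2 * Real.log t / t) ^ 2
      + Ψ' (g t) * ((2 - 2 * Real.log t) / t ^ 2))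
    ?_ ?_ ?_ ?_
  · -- continuity
    intro t ht
    have hco : ContinuousWithinAt g (Set.Ioi 0) t :=
      ((hgd t ht).continuousAt).continuousWithinAt
    have hΨc : ContinuousWithinAt Ψ (Set.Ici 0) (g t) :=
      (hd1 (g t) (hmaps t)).continuousWithinAt
    exact hΨc.comp hco (fun y _ => hmaps y)
  · -- first derivative
    intro t ht
    rw [interior_Ioi] at ht
    have hcomp : HasDerivWithinAt (fun u => Ψ (g u)) (Ψ' (g t) * (2 * Real.log t / t))
        (Set.Ioi 0) t :=
      (hd1 (g t) (hmaps t)).comp t ((hgd t ht).hasDerivWithinAt) (fun y _ => hmaps y)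
    rw [interior_Ioi]
    exact hcomp
  · -- second derivative
    intro t ht
    rw [interior_Ioi] at ht ⊢
    have ht0 : (t:ℝ) ≠ 0 := ne_of_gt ht
    have hA : HasDerivWithinAt (fun u => Ψ' (g u)) (Ψ'' (g t) * (2 * Real.log t / t))
        (Set.Ioi 0) t :=
      (hd2 (g t) (hmaps t)).comp t ((hgd t ht).hasDerivWithinAt) (fun y _ => hmaps y)
    have hB : HasDerivAt (fun u : ℝ => 2 * Real.log u / u)
        ((2 - 2 * Real.log t) / t ^ 2) t := by
      have h1 : HasDerivAt (fun u : ℝ => 2 * Real.log u) (2 / t) t := by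
        have := (Real.hasDerivAt_log ht0).const_mul 2
        simpa [div_eq_mul_inv] using this
      have h2 : HasDerivAt (fun u : ℝ => u⁻¹) (-(t ^ 2)⁻¹) t := hasDerivAt_inv ht0
      have := h1.mul h2
      refine this.congr_deriv ?_
      field_simp
      ring
    have := hA.mul (hB.hasDerivWithinAt)
    refine this.congr_deriv ?_
    ring
  · -- nonnegativity of f''
    intro t ht
    rw [interior_Ioi] at ht
    set L := Real.log t with hL
    have ht0 : (0:ℝ) < t := ht
    have hp : 0 ≤ Ψ' (g t) := hΨ'nonneg _ (hmaps t)
    have ht2 : (0:ℝ) < t ^ 2 := by positivity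
    rcases le_or_gt L 1 with hL1 | hL1
    · have hpp : 0 ≤ Ψ'' (g t) := hΨ''nonneg _ (hmaps t)
      have h1 : 0 ≤ Ψ'' (g t) * (2 * L / t) ^ 2 :=
        mul_nonneg hpp (sq_nonneg _)
      have h2 : 0 ≤ Ψ' (g t) * ((2 - 2 * L) / t ^ 2) :=
        mul_nonneg hp (div_nonneg (by linarith) ht2.le)
      exact add_nonneg h1 h2
    · have hgt : (1:ℝ) < g t := by
        have : (1:ℝ) < L ^ 2 := by nlinarith
        simpa [hg, ← hL] using this
      have hin := hineq (g t) hgt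
      have key : 0 ≤ 4 * L ^ 2 * Ψ'' (g t) + (2 - 2 * L) * Ψ' (g t) := by
        nlinarith [mul_nonneg (sq_nonneg L) (by linarith : 0 ≤ Ψ'' (g t) - (1/8) * Ψ' (g t)),
          mul_nonneg hp (sq_nonneg (L - 2))]
      have heq : Ψ'' (g t) * (2 * L / t) ^ 2 + Ψ' (g t) * ((2 - 2 * L) / t ^ 2)
          = (4 * L ^ 2 * Ψ'' (g t) + (2 - 2 * L) * Ψ' (g t)) / t ^ 2 := by
        field_simp
        ring
      rw [heq]
      exact div_nonneg key ht2.le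
end

section
/- Let n ≥ 2 and let Ψ: [0,∞) → ℝ be continuously differentiable. If the mapping F ↦ Ψ(‖log U‖²) is rank-one convex on GL⁺(n), where U = √(FᵀF), then Ψ is monotone increasing on [0,∞). -/
open Matrix Real

attribute [local instance] Matrix.frobeniusNormedAddCommGroup Matrix.frobeniusNormedSpace

noncomputable section Aux

/-- A primary matrix function maps diagonal matrices to diagonal matrices, applying `f`
entrywise on the diagonal. -/
lemma matFun_diagonal {n : ℕ} (f : ℝ → ℝ) (v : Fin n → ℝ) :
    matFun f (Matrix.diagonal v) = Matrix.diagonal (f ∘ v) := by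
  have hA : (Matrix.diagonal v).IsHermitian := Matrix.isHermitian_diagonal v
  rw [matFun, dif_pos hA]
  set U : Mat n := (hA.eigenvectorUnitary : Mat n) with hUdef
  have hUU : U * star U = 1 := Matrix.mem_unitaryGroup_iff.mp hA.eigenvectorUnitary.2
  have h1 : star U * U = 1 := Matrix.mem_unitaryGroup_iff'.mp hA.eigenvectorUnitary.2
  have hD : Matrix.diagonal (RCLike.ofReal ∘ hA.eigenvalues)
      = Matrix.diagonal hA.eigenvalues := by
    congr 1
  have hspec : Matrix.diagonal v * U = U * Matrix.diagonal hA.eigenvalues := by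
    conv_lhs => rw [hA.spectral_theorem, hD]
    rw [Unitary.conjStarAlgAut_apply, ← hUdef, mul_assoc, h1, mul_one]
  have key : ∀ i k, v i * U i k = U i k * hA.eigenvalues k := by
    intro i k
    have h2 : (Matrix.diagonal v * U) i k = (U * Matrix.diagonal hA.eigenvalues) i k := by
      rw [hspec]
    rwa [Matrix.diagonal_mul, Matrix.mul_diagonal] at h2
  ext i j
  have hterm : ∀ k, (U * Matrix.diagonal (f ∘ hA.eigenvalues)) i k * (star U) k j
      = f (v i) * (U i k * (star U) k j) := by
    intro k
    rw [Matrix.mul_diagonal]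
    rcases eq_or_ne (U i k) 0 with h | h
    · simp [h]
    · have hev : hA.eigenvalues k = v i := by
        have hk := key i k
        rw [mul_comm (v i) (U i k)] at hk
        exact (mul_left_cancel₀ h hk.symm)
      rw [Function.comp_apply, hev]; ring
  calc (U * Matrix.diagonal (f ∘ hA.eigenvalues) * star U) i j
      = ∑ k, (U * Matrix.diagonal (f ∘ hA.eigenvalues)) i k * (star U) k j :=
        Matrix.mul_apply
    _ = ∑ k, f (v i) * (U i k * (star U) k j) :=
        Finset.sum_congr rfl (fun k _ => hterm k)
    _ = f (v i) * (U * star U) i j := by rw [← Finset.mul_sum, Matrix.mul_apply]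
    _ = Matrix.diagonal (f ∘ v) i j := by
        rw [hUU]
        rcases eq_or_ne i j with h | h
        · subst h; simp [Matrix.one_apply_eq]
        · simp [Matrix.one_apply_ne h, Matrix.diagonal_apply_ne _ h]

/-- `logU` of a positive diagonal matrix is the entrywise logarithm. -/
lemma logU_diagonal {n : ℕ} (d : Fin n → ℝ) (hd : ∀ i, 0 < d i) :
    logU (Matrix.diagonal d) = Matrix.diagonal (fun i => Real.log (d i)) := by
  rw [logU, Matrix.diagonal_transpose, Matrix.diagonal_mul_diagonal, matSqrt, matFun_diagonal]
  have h : (Real.sqrt ∘ fun i => d i * d i) = d := by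
    funext i
    simp only [Function.comp_apply]
    exact Real.sqrt_mul_self (hd i).le
  rw [h, matLog, matFun_diagonal]
  rfl

/-- `nsq` of a diagonal matrix. -/
lemma nsq_diagonal {n : ℕ} (w : Fin n → ℝ) : nsq (Matrix.diagonal w) = ∑ i, (w i) ^ 2 := by
  rw [nsq, Matrix.diagonal_transpose, Matrix.diagonal_mul_diagonal, Matrix.trace_diagonal]
  simp [sq]

end Aux

/-- **Lemma 3.1.** Let `n ≥ 2` and let `Ψ : [0,∞) → ℝ` be continuously differentiable. If
`F ↦ Ψ(‖log U‖²)` (with `U = √(FᵀF)`) is rank-one convex on `GL⁺(n)`, then `Ψ` is monotone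
increasing on `[0,∞)`. -/
theorem monotonicity_from_rank_one_convexity_logU
    (n : ℕ) (hn : 2 ≤ n)
    (Ψ : ℝ → ℝ) (hΨ : ContDiffOn ℝ 1 Ψ (Set.Ici 0))
    (hW : RankOneConvex (fun F : Mat n => Ψ (nsq (logU F)))) :
    MonotoneOn Ψ (Set.Ici 0) := by
  intro a ha b hb hab
  rcases eq_or_lt_of_le hab with rfl | hlt
  · exact le_refl _
  haveI : NeZero n := ⟨by omega⟩
  have ha' : (0 : ℝ) ≤ a := ha
  have h10 : (1 : Fin n) ≠ 0 := by
    intro h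
    have hv := congrArg Fin.val h
    rw [Fin.val_one', Fin.val_zero, Nat.mod_eq_of_lt (by omega)] at hv
    exact one_ne_zero hv
  -- the base point and rank-one direction
  set d : Fin n → ℝ := fun i => if i = 1 then Real.exp (Real.sqrt a) else 1 with hd
  have hdpos : ∀ i, 0 < d i := by
    intro i
    by_cases h : i = 1 <;> simp [hd, h, Real.exp_pos]
  set ξ : Fin n → ℝ := Pi.single 0 1 with hξ
  -- the perturbed diagonal entries
  set w : ℝ → Fin n → ℝ := fun t i => if i = 0 then 1 + t else d i with hw
  have hline : ∀ t : ℝ, Matrix.diagonal d + t • vecMulVec ξ ξ = Matrix.diagonal (w t) := by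
    intro t
    ext i j
    rcases eq_or_ne i j with h | h
    · subst h
      rcases eq_or_ne i 0 with h0 | h0
      · subst h0
        have hd0 : d 0 = 1 := if_neg (Ne.symm h10)
        simp [hw, Matrix.vecMulVec_apply, hξ, hd0]
      · simp [hw, hξ, Matrix.vecMulVec_apply, Pi.single_apply, h0]
    · have hz : ξ i * ξ j = 0 := by
        rcases eq_or_ne j 0 with hj | hj
        · have hi : i ≠ 0 := fun hi => h (hi.trans hj.symm)
          simp [hξ, Pi.single_apply, hi]
        · simp [hξ, Pi.single_apply, hj]
      simp [Matrix.diagonal_apply_ne _ h, Matrix.vecMulVec_apply, hz]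
  have hwpos : ∀ t : ℝ, -1 < t → ∀ i, 0 < w t i := by
    intro t ht i
    by_cases h : i = 0
    · simp [hw, h]; linarith
    · simp only [hw, if_neg h]; exact hdpos i
  have hFmem : Matrix.diagonal d ∈ GLp n := by
    have : (Matrix.diagonal d).det = ∏ i, d i := Matrix.det_diagonal
    rw [GLp, Set.mem_setOf_eq, this]
    exact Finset.prod_pos fun i _ => hdpos i
  have hdet : ∀ t ∈ Set.Ioi (-1 : ℝ),
      0 < (Matrix.diagonal d + t • vecMulVec ξ ξ).det := by
    intro t ht
    rw [hline t, Matrix.det_diagonal]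
    exact Finset.prod_pos fun i _ => hwpos t ht i
  have hconv := hW (Matrix.diagonal d) hFmem ξ ξ (Set.Ioi (-1)) (convex_Ioi _) hdet
  -- value of the energy along the line
  have hval : ∀ t : ℝ, -1 < t →
      Ψ (nsq (logU (Matrix.diagonal d + t • vecMulVec ξ ξ)))
        = Ψ ((Real.log (1 + t)) ^ 2 + a) := by
    intro t ht
    rw [hline t, logU_diagonal _ (hwpos t ht), nsq_diagonal]
    congr 1
    have hsplit : ∀ i : Fin n, (Real.log (w t i)) ^ 2
        = (if i = 0 then (Real.log (1 + t)) ^ 2 else 0) + (if i = 1 then a else 0) := by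
      intro i
      rcases eq_or_ne i 0 with h0 | h0
      · subst h0
        simp [hw, h10.symm]
      · rcases eq_or_ne i 1 with h1 | h1
        · subst h1
          simp [hw, h10, hd, Real.log_exp, Real.sq_sqrt ha']
        · simp [hw, hd, h0, h1]
    rw [Finset.sum_congr rfl (fun i _ => hsplit i), Finset.sum_add_distrib]
    rw [Finset.sum_ite_eq' Finset.univ (0 : Fin n) (fun _ => (Real.log (1 + t)) ^ 2),
      Finset.sum_ite_eq' Finset.univ (1 : Fin n) (fun _ => a)]
    simp
  -- the three points and convexity
  set c : ℝ := Real.sqrt (b - a) with hc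
  have hba : (0 : ℝ) ≤ b - a := by linarith
  have hcsq : c ^ 2 = b - a := Real.sq_sqrt hba
  set s : ℝ := Real.exp c with hs
  have hspos : 0 < s := Real.exp_pos c
  set t₁ : ℝ := Real.exp (-c) - 1 with ht₁
  set t₂ : ℝ := s - 1 with ht₂
  have ht₁mem : t₁ ∈ Set.Ioi (-1 : ℝ) := by
    have := Real.exp_pos (-c); simp only [Set.mem_Ioi, ht₁]; linarith
  have ht₂mem : t₂ ∈ Set.Ioi (-1 : ℝ) := by
    simp only [Set.mem_Ioi, ht₂]; linarith
  set lam : ℝ := s / (s + 1) with hlam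
  set mu : ℝ := 1 / (s + 1) with hmu
  have hs1 : (0 : ℝ) < s + 1 := by linarith
  have hlam0 : 0 ≤ lam := div_nonneg hspos.le hs1.le
  have hmu0 : 0 ≤ mu := div_nonneg zero_le_one hs1.le
  have hlm : lam + mu = 1 := by
    rw [hlam, hmu, ← add_div, div_self (ne_of_gt hs1)]
  have hexpneg : Real.exp (-c) = 1 / s := by
    rw [hs, Real.exp_neg]; exact inv_eq_one_div _
  have hzero : lam * t₁ + mu * t₂ = 0 := by
    rw [hlam, hmu, ht₁, ht₂, hexpneg]
    field_simp
    ring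
  have hkey := hconv.2 ht₁mem ht₂mem hlam0 hmu0 hlm
  rw [smul_eq_mul, smul_eq_mul, smul_eq_mul, smul_eq_mul, hzero] at hkey
  dsimp only at hkey
  rw [hval t₁ ht₁mem, hval t₂ ht₂mem, hval 0 (by norm_num)] at hkey
  have e0 : (Real.log (1 + (0 : ℝ))) ^ 2 + a = a := by
    norm_num
  have e1 : (Real.log (1 + t₁)) ^ 2 + a = b := by
    rw [ht₁]
    have : (1 : ℝ) + (Real.exp (-c) - 1) = Real.exp (-c) := by ring
    rw [this, Real.log_exp, neg_sq, hcsq]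
    ring
  have e2 : (Real.log (1 + t₂)) ^ 2 + a = b := by
    rw [ht₂]
    have : (1 : ℝ) + (s - 1) = s := by ring
    rw [this, hs, Real.log_exp, hcsq]
    ring
  rw [e0, e1, e2] at hkey
  calc Ψ a ≤ lam * Ψ b + mu * Ψ b := hkey
    _ = (lam + mu) * Ψ b := by ring
    _ = Ψ b := by rw [hlm, one_mul]
end

section
/- Let F = diag(e⁸, e²) ∈ GL⁺(2), ξ = (√2/2)·(1,1)ᵀ ∈ ℝ², and η = √2·(−e⁸, 4e²)ᵀ ∈ ℝ². Define h(t) = ‖log √((F + t·ξ⊗η)ᵀ(F + t·ξ⊗η))‖² for t ∈ (−1/3, 1/3) (on which det(F + t·ξ⊗η) = e¹⁰(3t+1) > 0). Then h is twice differentiable at 0 with h'(0) = 0 and h''(0) = (110 − 2e¹²)/(e¹² − 1) < 0; in particular, the function F ↦ ‖log U‖² has a vanishing first derivative and a negative second derivative at F in the rank-one direction ξ⊗η. -/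
open Matrix Real

attribute [local instance] Matrix.frobeniusNormedAddCommGroup Matrix.frobeniusNormedSpace

set_option linter.unusedSectionVars false
set_option maxHeartbeats 1000000

noncomputable section AuxProof
open Polynomial

def conjAH {n : ℕ} (P V : Mat n) (hPV : P * V = 1) (hVP : V * P = 1) : Mat n →ₐ[ℝ] Mat n where
  toFun X := P * X * V
  map_one' := by simpa using hPV
  map_mul' X Y := by
    calc P * (X * Y) * V = P * X * ((V * P) * (Y * V)) := by rw [hVP]; noncomm_ring
      _ = P * X * V * (P * Y * V) := by noncomm_ring
  map_zero' := by simp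
  map_add' X Y := by noncomm_ring
  commutes' c := by
    simp only [Algebra.algebraMap_eq_smul_one, mul_smul_comm, smul_mul_assoc, mul_one, hPV]

lemma aeval_conj_diag {n : ℕ} (P V : Mat n) (hPV : P * V = 1) (hVP : V * P = 1)
    (e : Fin n → ℝ) (p : ℝ[X]) :
    aeval (P * Matrix.diagonal e * V) p = P * Matrix.diagonal (fun i => p.eval (e i)) * V := by
  have h1 : P * Matrix.diagonal e * V
      = conjAH P V hPV hVP ((Matrix.diagonalAlgHom ℝ : (Fin n → ℝ) →ₐ[ℝ] Mat n) e) := rfl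
  have h2 : aeval e p = fun i => p.eval (e i) := by
    funext i
    have := aeval_algHom_apply (Pi.evalAlgHom ℝ (fun _ : Fin n => ℝ) i) e p
    simpa using this.symm
  rw [h1, aeval_algHom_apply, aeval_algHom_apply, h2]
  rfl

lemma matFun_conj {n : ℕ} (f : ℝ → ℝ) (Q : Mat n) (d : Fin n → ℝ)
    (h1 : Q * Qᵀ = 1) (h2 : Qᵀ * Q = 1) :
    matFun f (Q * Matrix.diagonal d * Qᵀ) = Q * Matrix.diagonal (f ∘ d) * Qᵀ := by
  have hA : (Q * Matrix.diagonal d * Qᵀ).IsHermitian := by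
    unfold Matrix.IsHermitian
    rw [Matrix.conjTranspose_eq_transpose_of_trivial]
    rw [Matrix.transpose_mul, Matrix.transpose_mul, Matrix.transpose_transpose,
      Matrix.diagonal_transpose, Matrix.mul_assoc]
  set A := Q * Matrix.diagonal d * Qᵀ with hAdef
  set U : Mat n := (hA.eigenvectorUnitary : Mat n) with hUdef
  have hU1 : U * star U = 1 := (Matrix.mem_unitaryGroup_iff).mp hA.eigenvectorUnitary.2
  have hU2 : star U * U = 1 := (Matrix.mem_unitaryGroup_iff').mp hA.eigenvectorUnitary.2
  have hspec : A = U * Matrix.diagonal hA.eigenvalues * star U := by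
    have := hA.spectral_theorem
    simpa using this
  set s : Finset ℝ := (Finset.image hA.eigenvalues Finset.univ) ∪ (Finset.image d Finset.univ)
    with hs
  set p : ℝ[X] := Lagrange.interpolate s id f with hp
  have hpeval : ∀ x ∈ s, p.eval x = f x := by
    intro x hx
    have := Lagrange.eval_interpolate_at_node f (Set.injOn_id _) hx
    simpa [hp] using this
  have e1 : aeval A p = U * Matrix.diagonal (f ∘ hA.eigenvalues) * star U := by
    conv_lhs => rw [hspec]
    rw [aeval_conj_diag U (star U) hU1 hU2]
    have hfd : (fun i => p.eval (hA.eigenvalues i)) = f ∘ hA.eigenvalues := funext fun i =>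
      hpeval _ (Finset.mem_union_left _ (Finset.mem_image_of_mem _ (Finset.mem_univ i)))
    rw [hfd]
  have e2 : aeval A p = Q * Matrix.diagonal (f ∘ d) * Qᵀ := by
    rw [hAdef, aeval_conj_diag Q Qᵀ h1 h2]
    have hfd : (fun i => p.eval (d i)) = f ∘ d := funext fun i =>
      hpeval _ (Finset.mem_union_right _ (Finset.mem_image_of_mem _ (Finset.mem_univ i)))
    rw [hfd]
  rw [matFun, dif_pos hA, ← e1, e2]

lemma tr2 (a b c d : ℝ) : (!![a,b;c,d] : Mat 2)ᵀ = !![a,c;b,d] := by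
  ext i j; fin_cases i <;> fin_cases j <;> simp

lemma eq2 {a b c d a' b' c' d' : ℝ} (h1 : a = a') (h2 : b = b') (h3 : c = c') (h4 : d = d') :
    (!![a,b;c,d] : Mat 2) = !![a',b';c',d'] := by rw [h1,h2,h3,h4]

lemma diag2 (a b : ℝ) : (Matrix.diagonal ![a,b] : Mat 2) = !![a,0;0,b] := by
  ext i j; fin_cases i <;> fin_cases j <;> simp [Matrix.diagonal]

lemma nsq_conj {n : ℕ} (Q : Mat n) (d : Fin n → ℝ) (h2 : Qᵀ * Q = 1) :
    nsq (Q * Matrix.diagonal d * Qᵀ) = ∑ i, (d i)^2 := by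
  unfold nsq
  rw [Matrix.transpose_mul, Matrix.transpose_mul, Matrix.transpose_transpose,
    Matrix.diagonal_transpose]
  have : Matrix.diagonal d * Qᵀ * (Q * Matrix.diagonal d * Qᵀ)
      = Matrix.diagonal d * (Qᵀ * Q) * Matrix.diagonal d * Qᵀ := by
    noncomm_ring
  rw [Matrix.mul_assoc, this, h2, Matrix.mul_one, Matrix.diagonal_mul_diagonal,
    ← Matrix.mul_assoc, Matrix.trace_mul_comm, ← Matrix.mul_assoc, h2, Matrix.one_mul,
    Matrix.trace_diagonal]
  exact Finset.sum_congr rfl fun i _ => (sq (d i)).symm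

lemma nsq_logU_2x2 (p q r μ1 μ2 : ℝ)
    (hsum : μ1 + μ2 = p + q) (hprod : μ1 * μ2 = p*q - r^2)
    (hupos : 0 < (μ1 - q)^2 + r^2) (hμ1 : 0 < μ1) (hμ2 : 0 < μ2) :
    nsq (matLog (matSqrt (!![p, r; r, q] : Mat 2)))
      = (Real.log μ1)^2/4 + (Real.log μ2)^2/4 := by
  set u := μ1 - q with hu
  set N := Real.sqrt (u^2+r^2) with hNdef
  have hNpos : 0 < N := Real.sqrt_pos.mpr hupos
  have hN : N^2 = u^2 + r^2 := Real.sq_sqrt hupos.le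
  set Q : Mat 2 := !![u/N, -(r/N); r/N, u/N] with hQdef
  have hQt : Qᵀ = !![u/N, r/N; -(r/N), u/N] := tr2 _ _ _ _
  have h1 : Q * Qᵀ = 1 := by
    rw [hQdef, hQt, Matrix.mul_fin_two, Matrix.one_fin_two]
    refine eq2 ?_ ?_ ?_ ?_
    · field_simp; linear_combination -hN
    · field_simp; ring
    · field_simp; ring
    · field_simp; linear_combination -hN
  have h2 : Qᵀ * Q = 1 := by
    rw [hQdef, hQt, Matrix.mul_fin_two, Matrix.one_fin_two]
    refine eq2 ?_ ?_ ?_ ?_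
    · field_simp; linear_combination -hN
    · field_simp; ring
    · field_simp; ring
    · field_simp; linear_combination -hN
  have hB : (!![p,r;r,q] : Mat 2) = Q * Matrix.diagonal ![μ1,μ2] * Qᵀ := by
    rw [hQdef, hQt, diag2, Matrix.mul_fin_two, Matrix.mul_fin_two]
    refine (eq2 ?_ ?_ ?_ ?_).symm <;> field_simp
    · linear_combination ((μ1-q)*q + (μ1-q)^2 + r^2) * hsum - (μ1-q) * hprod - p * hN
    · linear_combination (r*q)*hsum - r*hprod - r*hN
    · linear_combination (r*q)*hsum - r*hprod - r*hN
    · linear_combination (-(q)*(μ1-q))*hsum + (μ1-q)*hprod - q*hN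
  rw [hB, matSqrt, matFun_conj _ _ _ h1 h2]
  have hc1 : Real.sqrt ∘ ![μ1, μ2] = ![Real.sqrt μ1, Real.sqrt μ2] := by
    funext i; fin_cases i <;> simp
  rw [hc1, matLog, matFun_conj _ _ _ h1 h2]
  have hc2 : Real.log ∘ ![Real.sqrt μ1, Real.sqrt μ2]
      = ![Real.log μ1 / 2, Real.log μ2 / 2] := by
    funext i; fin_cases i <;> simp [Real.log_sqrt hμ1.le, Real.log_sqrt hμ2.le]
  rw [hc2, nsq_conj _ _ h2, Fin.sum_univ_two]
  norm_num
  ring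

def Pf (t : ℝ) : ℝ := Real.exp 16*(2*t^2-2*t+1)
def Qf (t : ℝ) : ℝ := Real.exp 4*(32*t^2+8*t+1)
def Rf (t : ℝ) : ℝ := Real.exp 10*(t*(3-8*t))
def Tf (t : ℝ) : ℝ := Real.exp 16*(2*t^2-2*t+1) + Real.exp 4*(32*t^2+8*t+1)
def dT (t : ℝ) : ℝ := Real.exp 16*(4*t-2) + Real.exp 4*(64*t+8)
def Df (t : ℝ) : ℝ := Tf t^2 - 4*Real.exp 20*(1+3*t)^2
def dD (t : ℝ) : ℝ := 2*Tf t*dT t - 24*Real.exp 20*(1+3*t)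
def Sf (t : ℝ) : ℝ := Real.sqrt (Df t)
def dS (t : ℝ) : ℝ := dD t / (2*Sf t)
def m1 (t : ℝ) : ℝ := (Tf t + Sf t)/2
def m2 (t : ℝ) : ℝ := (Tf t - Sf t)/2
def dm1 (t : ℝ) : ℝ := (dT t + dS t)/2
def dm2 (t : ℝ) : ℝ := (dT t - dS t)/2
def Gf (t : ℝ) : ℝ := (Real.log (m1 t))^2/4 + (Real.log (m2 t))^2/4
def G1 (t : ℝ) : ℝ :=
  (Real.log (m1 t) * (dm1 t / m1 t) + Real.log (m2 t) * (dm2 t / m2 t))/2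

lemma exp4_ge : (5:ℝ) ≤ Real.exp 4 := by
  nlinarith [Real.add_one_le_exp (4:ℝ)]

lemma he_16 : Real.exp 16 = Real.exp 4 ^ 4 := by
  rw [← Real.exp_nat_mul]; norm_num
lemma he_20 : Real.exp 20 = Real.exp 4 ^ 5 := by
  rw [← Real.exp_nat_mul]; norm_num
lemma he_12 : Real.exp 12 = Real.exp 4 ^ 3 := by
  rw [← Real.exp_nat_mul]; norm_num

lemma hasDerivAt_Tf (t : ℝ) : HasDerivAt Tf (dT t) t := by
  have h1 : HasDerivAt (fun x : ℝ => x^2) (2*t) t := by simpa using hasDerivAt_pow 2 t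
  have h2 := (((h1.const_mul (2:ℝ)).sub ((hasDerivAt_id t).const_mul (2:ℝ))).add_const 1).const_mul (Real.exp 16)
  have h3 := (((h1.const_mul (32:ℝ)).add ((hasDerivAt_id t).const_mul (8:ℝ))).add_const 1).const_mul (Real.exp 4)
  have h4 := h2.add h3
  refine h4.congr_deriv ?_
  unfold dT; ring

lemma hasDerivAt_Df (t : ℝ) : HasDerivAt Df (dD t) t := by
  have h1 := (hasDerivAt_Tf t).pow 2
  have h2 := ((((hasDerivAt_id t).const_mul (3:ℝ)).const_add 1).pow 2).const_mul (4*Real.exp 20)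
  have h4 := h1.sub h2
  refine h4.congr_deriv ?_
  try simp only [id_eq]
  unfold dD
  try push_cast
  ring

lemma hasDerivAt_dT (t : ℝ) : HasDerivAt dT (Real.exp 16*4 + Real.exp 4*64) t := by
  have h2 := (((hasDerivAt_id t).const_mul (4:ℝ)).sub_const 2).const_mul (Real.exp 16)
  have h3 := (((hasDerivAt_id t).const_mul (64:ℝ)).add_const 8).const_mul (Real.exp 4)
  have h4 := h2.add h3
  refine h4.congr_deriv ?_
  try simp only [id_eq]
  try push_cast
  ring

lemma hasDerivAt_dD (t : ℝ) :
    HasDerivAt dD (2*(dT t*dT t + Tf t*(Real.exp 16*4 + Real.exp 4*64)) - 72*Real.exp 20) t := by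
  have h1 := (((hasDerivAt_Tf t).const_mul (2:ℝ)).mul (hasDerivAt_dT t))
  have h2 := (((hasDerivAt_id t).const_mul (3:ℝ)).const_add 1).const_mul (24*Real.exp 20)
  have h4 := h1.sub h2
  refine h4.congr_deriv ?_
  try simp only [id_eq]
  try push_cast
  ring

section interval
variable {t : ℝ} (ht1 : -(1/10) < t) (ht2 : t < 1/10)
include ht1 ht2

lemma hPQ : Qf t < Pf t := by
  unfold Pf Qf
  have h16 : Real.exp 16 = Real.exp 12 * Real.exp 4 := by
    rw [← Real.exp_add]; norm_num
  have h13 : (13:ℝ) ≤ Real.exp 12 := by nlinarith [Real.add_one_le_exp (12:ℝ)]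
  have h4 : (0:ℝ) < Real.exp 4 := Real.exp_pos _
  have hq : 2*t^2-2*t+1 ≥ 4/5 := by nlinarith
  rw [h16]
  have hr : 32*t^2+8*t+1 ≤ 53/25 := by nlinarith
  have h1 : Real.exp 4 * (32*t^2+8*t+1) ≤ Real.exp 4 * (53/25) := by nlinarith
  have h3 : 13*(4/5) ≤ Real.exp 12*(2*t^2-2*t+1) := by nlinarith
  nlinarith [mul_le_mul_of_nonneg_right h3 h4.le]

lemma hDfeq : Df t = (Pf t - Qf t)^2 + 4*(Rf t)^2 := by
  unfold Df Tf Pf Qf Rf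
  have hA : Real.exp 16 * Real.exp 4 = Real.exp 20 := by rw [← Real.exp_add]; norm_num
  have hB : Real.exp 10 * Real.exp 10 = Real.exp 20 := by rw [← Real.exp_add]; norm_num
  linear_combination (4*(2*t^2-2*t+1)*(32*t^2+8*t+1))*hA - (4*(t*(3-8*t))^2)*hB

lemma hDfpos : 0 < Df t := by
  rw [hDfeq ht1 ht2]
  have := hPQ ht1 ht2
  nlinarith [sq_nonneg (Rf t)]

lemma hS2 : Sf t^2 = Df t := Real.sq_sqrt (hDfpos ht1 ht2).le

lemma hSfpos : 0 < Sf t := Real.sqrt_pos.mpr (hDfpos ht1 ht2)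

lemma hTfpos : 0 < Tf t := by
  unfold Tf
  have h4 : (0:ℝ) < Real.exp 4 := Real.exp_pos _
  have h16 : (0:ℝ) < Real.exp 16 := Real.exp_pos _
  nlinarith

lemma hm1pos : 0 < m1 t := by
  have := hSfpos ht1 ht2; have := hTfpos ht1 ht2
  unfold m1; linarith

lemma hm2pos : 0 < m2 t := by
  have hs := hSfpos ht1 ht2; have htf := hTfpos ht1 ht2
  have hs2 := hS2 ht1 ht2
  have h20 : (0:ℝ) < Real.exp 20 := Real.exp_pos _
  have h3t : 0 < 1+3*t := by linarith
  have hdf : Df t = Tf t^2 - 4*Real.exp 20*(1+3*t)^2 := rfl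
  have : Sf t < Tf t := by nlinarith [mul_pos (mul_pos h20 h3t) h3t]
  unfold m2; linarith

lemma hm1Q : 0 < m1 t - Qf t := by
  have hs := hSfpos ht1 ht2
  have hpq := hPQ ht1 ht2
  have : m1 t - Qf t = ((Pf t - Qf t) + Sf t)/2 := by unfold m1 Tf Pf Qf; ring
  rw [this]; linarith

lemma hsum' : m1 t + m2 t = Pf t + Qf t := by unfold m1 m2 Tf Pf Qf; ring

lemma hprod' : m1 t * m2 t = Pf t * Qf t - Rf t^2 := by
  have hs2 := hS2 ht1 ht2
  have hDeq := hDfeq ht1 ht2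
  have : m1 t * m2 t = (Tf t^2 - Sf t^2)/4 := by unfold m1 m2; ring
  rw [this, hs2, hDeq]
  have hT : Tf t = Pf t + Qf t := by unfold Tf Pf Qf; ring
  rw [hT]; ring

lemma hasDerivAt_Sf : HasDerivAt Sf (dS t) t := by
  have h := (hasDerivAt_Df t).sqrt (ne_of_gt (hDfpos ht1 ht2))
  exact h

lemma hasDerivAt_Gf : HasDerivAt Gf (G1 t) t := by
  have hm1 := ((hasDerivAt_Tf t).add (hasDerivAt_Sf ht1 ht2)).div_const 2
  have hm2 := ((hasDerivAt_Tf t).sub (hasDerivAt_Sf ht1 ht2)).div_const 2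
  have hl1 := (hm1.log (ne_of_gt (hm1pos ht1 ht2)))
  have hl2 := (hm2.log (ne_of_gt (hm2pos ht1 ht2)))
  have h := ((hl1.pow 2).div_const 4).add ((hl2.pow 2).div_const 4)
  refine h.congr_deriv ?_
  simp only [Pi.add_apply, Pi.sub_apply]
  unfold G1 dm1 dm2 m1 m2
  push_cast
  ring

end interval

lemma hA20 : Real.exp 16 * Real.exp 4 = Real.exp 20 := by rw [← Real.exp_add]; norm_num

lemma Tf0 : Tf 0 = Real.exp 16 + Real.exp 4 := by unfold Tf; norm_num
lemma dT0 : dT 0 = -2*Real.exp 16 + 8*Real.exp 4 := by unfold dT; ring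
lemma Df0 : Df 0 = (Real.exp 16 - Real.exp 4)^2 := by
  unfold Df; rw [Tf0]; linear_combination 4*hA20
lemma Sf0 : Sf 0 = Real.exp 16 - Real.exp 4 := by
  unfold Sf; rw [Df0]
  exact Real.sqrt_sq (by nlinarith [Real.exp_le_exp.mpr (show (4:ℝ) ≤ 16 by norm_num)])
lemma m10 : m1 0 = Real.exp 16 := by unfold m1; rw [Tf0, Sf0]; ring
lemma m20 : m2 0 = Real.exp 4 := by unfold m2; rw [Tf0, Sf0]; ring

lemma expgaps : Real.exp 4 ^ 4 - Real.exp 4 ≠ 0 ∧ Real.exp 4 ^ 3 - 1 ≠ 0 := by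
  have h5 := exp4_ge
  have h2 : (25:ℝ) ≤ Real.exp 4^2 := by nlinarith
  have h3 : (125:ℝ) ≤ Real.exp 4^3 := by nlinarith
  constructor
  · nlinarith
  · nlinarith

lemma G1_zero : G1 0 = 0 := by
  unfold G1
  rw [m10, m20, Real.log_exp, Real.log_exp]
  rw [show dm1 0 = (dT 0 + dS 0)/2 from rfl, show dm2 0 = (dT 0 - dS 0)/2 from rfl,
    show dS 0 = dD 0 / (2*Sf 0) from rfl, show dD 0 = 2*Tf 0*dT 0 - 24*Real.exp 20 by unfold dD; norm_num,
    Tf0, dT0, Sf0, he_16, he_20]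
  have h5 := exp4_ge
  have h1 : Real.exp 4 ^ 4 - Real.exp 4 ≠ 0 := expgaps.1
  have h0 : Real.exp 4 ≠ 0 := by positivity
  have h2 : Real.exp 4 ^ 3 - 1 ≠ 0 := expgaps.2
  field_simp
  ring

lemma hasDerivAt_G1 : HasDerivAt G1 ((110 - 2*Real.exp 12)/(Real.exp 12 - 1)) 0 := by
  have h0a : -(1/10:ℝ) < 0 := by norm_num
  have h0b : (0:ℝ) < 1/10 := by norm_num
  have hT := hasDerivAt_Tf 0
  have hS := hasDerivAt_Sf h0a h0b
  have hdT := hasDerivAt_dT 0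
  have hdD := hasDerivAt_dD 0
  have hSne : (2:ℝ)*Sf 0 ≠ 0 := by
    have := hSfpos h0a h0b; positivity
  have hm1ne : m1 0 ≠ 0 := ne_of_gt (hm1pos h0a h0b)
  have hm2ne : m2 0 ≠ 0 := ne_of_gt (hm2pos h0a h0b)
  have hm1 : HasDerivAt m1 (dm1 0) 0 := by
    have := (hT.add hS).div_const 2
    exact this
  have hm2 : HasDerivAt m2 (dm2 0) 0 := by
    have := (hT.sub hS).div_const 2
    exact this
  have hdS := hdD.div (hS.const_mul (2:ℝ)) hSne
  have hdm1 : HasDerivAt dm1 (((Real.exp 16*4 + Real.exp 4*64) +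
      ((2*(dT 0*dT 0 + Tf 0*(Real.exp 16*4 + Real.exp 4*64)) - 72*Real.exp 20) * (2*Sf 0)
        - dD 0 * (2*dS 0)) / (2*Sf 0)^2)/2) 0 := (hdT.add hdS).div_const 2
  have hdm2 : HasDerivAt dm2 (((Real.exp 16*4 + Real.exp 4*64) -
      ((2*(dT 0*dT 0 + Tf 0*(Real.exp 16*4 + Real.exp 4*64)) - 72*Real.exp 20) * (2*Sf 0)
        - dD 0 * (2*dS 0)) / (2*Sf 0)^2)/2) 0 := (hdT.sub hdS).div_const 2
  have hl1 := hm1.log hm1ne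
  have hl2 := hm2.log hm2ne
  have hq1 := hdm1.div hm1 hm1ne
  have hq2 := hdm2.div hm2 hm2ne
  have hp1 := hl1.mul hq1
  have hp2 := hl2.mul hq2
  have H := (hp1.add hp2).div_const 2
  refine H.congr_deriv ?_
  simp only [Pi.div_apply]
  rw [m10, m20, Real.log_exp, Real.log_exp,
    show dm1 0 = (dT 0 + dS 0)/2 from rfl, show dm2 0 = (dT 0 - dS 0)/2 from rfl,
    show dS 0 = dD 0/(2*Sf 0) from rfl,
    show dD 0 = 2*Tf 0*dT 0 - 24*Real.exp 20 by unfold dD; norm_num,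
    Tf0, dT0, Sf0, he_16, he_20, he_12]
  have h5 := exp4_ge
  have h1 : Real.exp 4 ^ 4 - Real.exp 4 ≠ 0 := expgaps.1
  have h2 : Real.exp 4 ^ 3 - 1 ≠ 0 := expgaps.2
  have h0 : Real.exp 4 ≠ 0 := by positivity
  field_simp
  ring

end AuxProof

/-- The explicit planar counterexample: for `F = diag(e⁸, e²)`, `ξ = (√2/2)(1,1)ᵀ` and
`η = √2(−e⁸, 4e²)ᵀ`, the function `h(t) = ‖log √((F + tξ⊗η)ᵀ(F + tξ⊗η))‖²` (defined on
`(−1/3, 1/3)`, where `det(F + tξ⊗η) = e¹⁰(3t+1) > 0`) is twice differentiable at `0` with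
`h'(0) = 0` and `h''(0) = (110 − 2e¹²)/(e¹² − 1) < 0`. -/
theorem planar_concave_critical_point
    (F : Mat 2) (hF : F = !![Real.exp 8, 0; 0, Real.exp 2])
    (ξ η : Fin 2 → ℝ)
    (hξ : ξ = ![Real.sqrt 2 / 2, Real.sqrt 2 / 2])
    (hη : η = ![-(Real.sqrt 2 * Real.exp 8), Real.sqrt 2 * (4 * Real.exp 2)])
    (h : ℝ → ℝ)
    (hh : ∀ t : ℝ, h t = nsq (matLog (matSqrt
      ((F + t • vecMulVec ξ η)ᵀ * (F + t • vecMulVec ξ η))))) :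
    (∀ t : ℝ, t ∈ Set.Ioo (-(1 / 3) : ℝ) (1 / 3) →
      (F + t • vecMulVec ξ η).det = Real.exp 10 * (3 * t + 1) ∧
      0 < (F + t • vecMulVec ξ η).det) ∧
    DifferentiableAt ℝ h 0 ∧
    DifferentiableAt ℝ (deriv h) 0 ∧
    deriv h 0 = 0 ∧
    deriv (deriv h) 0 = (110 - 2 * Real.exp 12) / (Real.exp 12 - 1) ∧
    (110 - 2 * Real.exp 12) / (Real.exp 12 - 1) < 0 := by
  have hs2 : Real.sqrt 2 * Real.sqrt 2 = 2 := Real.mul_self_sqrt (by norm_num)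
  have he16 : Real.exp 8 * Real.exp 8 = Real.exp 16 := by rw [← Real.exp_add]; norm_num
  have he4 : Real.exp 2 * Real.exp 2 = Real.exp 4 := by rw [← Real.exp_add]; norm_num
  have he10 : Real.exp 8 * Real.exp 2 = Real.exp 10 := by rw [← Real.exp_add]; norm_num
  have hM : vecMulVec ξ η = !![-(Real.exp 8), 4*Real.exp 2; -(Real.exp 8), 4*Real.exp 2] := by
    subst hξ hη
    ext i j
    fin_cases i <;> fin_cases j <;> simp [Matrix.vecMulVec_apply]
    · linear_combination (Real.exp 8/2) * hs2
    · linear_combination (2*Real.exp 2)*hs2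
    · linear_combination (Real.exp 8/2) * hs2
    · linear_combination (2*Real.exp 2)*hs2
  have hC : ∀ t : ℝ, F + t • vecMulVec ξ η
      = !![Real.exp 8*(1-t), 4*Real.exp 2*t; -(Real.exp 8*t), Real.exp 2*(1+4*t)] := by
    intro t
    rw [hM, hF]
    ext i j
    fin_cases i <;> fin_cases j <;> simp <;> ring
  have hB : ∀ t : ℝ, (F + t • vecMulVec ξ η)ᵀ * (F + t • vecMulVec ξ η)
      = !![Pf t, Rf t; Rf t, Qf t] := by
    intro t
    rw [hC t, tr2, Matrix.mul_fin_two]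
    refine eq2 ?_ ?_ ?_ ?_
    · unfold Pf; linear_combination ((1-t)^2 + t^2) * he16
    · unfold Rf; linear_combination (t*(3-8*t)) * he10
    · unfold Rf; linear_combination (t*(3-8*t)) * he10
    · unfold Qf; linear_combination (16*t^2 + (1+4*t)^2) * he4
  have key : ∀ t : ℝ, -(1/10) < t → t < 1/10 → h t = Gf t := by
    intro t ht1 ht2
    rw [hh t, hB t]
    rw [nsq_logU_2x2 (Pf t) (Qf t) (Rf t) (m1 t) (m2 t) (hsum' ht1 ht2) (hprod' ht1 ht2)
      (add_pos_of_pos_of_nonneg (pow_pos (hm1Q ht1 ht2) 2) (sq_nonneg _))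
      (hm1pos ht1 ht2) (hm2pos ht1 ht2)]
    rfl
  have hmemJ : Set.Ioo (-(1/10):ℝ) (1/10) ∈ nhds (0:ℝ) :=
    Ioo_mem_nhds (by norm_num) (by norm_num)
  have heq : h =ᶠ[nhds 0] Gf :=
    Filter.eventuallyEq_of_mem hmemJ (fun t ht => key t ht.1 ht.2)
  have h0a : -(1/10:ℝ) < 0 := by norm_num
  have h0b : (0:ℝ) < 1/10 := by norm_num
  have hG0 : HasDerivAt Gf (G1 0) 0 := hasDerivAt_Gf h0a h0b
  have hderivEq : deriv h =ᶠ[nhds 0] G1 := by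
    apply Filter.eventuallyEq_of_mem hmemJ
    intro t ht
    have heqt : h =ᶠ[nhds t] Gf :=
      Filter.eventuallyEq_of_mem (Ioo_mem_nhds ht.1 ht.2) (fun s hs => key s hs.1 hs.2)
    rw [heqt.deriv_eq, (hasDerivAt_Gf ht.1 ht.2).deriv]
  have hd1 : DifferentiableAt ℝ h 0 := heq.differentiableAt_iff.mpr hG0.differentiableAt
  have hd2 : DifferentiableAt ℝ (deriv h) 0 :=
    hderivEq.differentiableAt_iff.mpr hasDerivAt_G1.differentiableAt
  have hdh0 : deriv h 0 = 0 := by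
    rw [heq.deriv_eq, hG0.deriv, G1_zero]
  have hddh0 : deriv (deriv h) 0 = (110 - 2 * Real.exp 12) / (Real.exp 12 - 1) := by
    rw [hderivEq.deriv_eq, hasDerivAt_G1.deriv]
  have h125 : (125:ℝ) ≤ Real.exp 12 := by
    rw [he_12]
    have h2 : (25:ℝ) ≤ Real.exp 4^2 := by nlinarith [exp4_ge]
    nlinarith [exp4_ge, h2]
  have hneg : (110 - 2 * Real.exp 12) / (Real.exp 12 - 1) < 0 :=
    div_neg_of_neg_of_pos (by linarith) (by linarith)
  refine ⟨?_, hd1, hd2, hdh0, hddh0, hneg⟩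
  intro t ht
  have hdet : (F + t • vecMulVec ξ η).det = Real.exp 10 * (3 * t + 1) := by
    rw [hC t, Matrix.det_fin_two_of]
    linear_combination ((1-t)*(1+4*t) + 4*t^2) * he10
  refine ⟨hdet, ?_⟩
  rw [hdet]
  have := ht.1
  have := ht.2
  have : (0:ℝ) < 3*t+1 := by
    have := ht.1
    simp at this
    linarith
  positivity
end

section
/- Let n ≥ 2 and let Ψ: [0,∞) → ℝ be any function. Then the function W: GL⁺(n) → ℝ defined by W(F) = Ψ(‖dev_n log U‖²), where U = √(FᵀF), is tension-compression symmetric and isochoric, i.e. W(F⁻¹) = W(F) and W(a·F) = W(F) for all F ∈ GL⁺(n) and all a > 0; in particular W(F) = W(F/(det F)^{1/n}) for all F ∈ GL⁺(n). -/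
open Matrix Real

attribute [local instance] Matrix.frobeniusNormedAddCommGroup Matrix.frobeniusNormedSpace

noncomputable section Aux
open Polynomial

variable {n : ℕ}

lemma charmatrix_conj (P A Q : Mat n) (hPQ : P * Q = 1) :
    charmatrix (P * A * Q) =
      P.map Polynomial.C * charmatrix A * Q.map Polynomial.C := by
  have hc : Commute (Matrix.scalar (Fin n) (X : ℝ[X])) (P.map Polynomial.C) :=
    Matrix.scalar_commute _ (fun r' => Commute.all _ _) _
  rw [charmatrix, charmatrix, mul_sub, sub_mul]
  congr 1
  · symm
    calc P.map Polynomial.C * Matrix.scalar (Fin n) (X : ℝ[X]) * Q.map Polynomial.C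
        = Matrix.scalar (Fin n) (X : ℝ[X]) * (P.map Polynomial.C * Q.map Polynomial.C) := by
          rw [← hc.eq, mul_assoc]
      _ = _ := by
          rw [← Matrix.map_mul, hPQ, Matrix.map_one _ (map_zero _) (map_one _), mul_one]
  · simp only [RingHom.mapMatrix_apply, Matrix.map_mul]

lemma charpoly_conj' (P A Q : Mat n) (hPQ : P * Q = 1) :
    (P * A * Q).charpoly = A.charpoly := by
  have hQP : Q * P = 1 := mul_eq_one_comm.mp hPQ
  have h1 : (Q.map (Polynomial.C : ℝ →+* ℝ[X]) * P.map Polynomial.C).det = 1 := by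
    rw [← Matrix.map_mul, hQP, Matrix.map_one _ (map_zero _) (map_one _), det_one]
  rw [Matrix.charpoly, Matrix.charpoly, charmatrix_conj P A Q hPQ, det_mul, det_mul,
    mul_comm, ← mul_assoc, ← det_mul, h1, one_mul]

lemma charpoly_diagonal' (d : Fin n → ℝ) :
    (Matrix.diagonal d).charpoly = ∏ i, (X - Polynomial.C (d i)) := by
  rw [Matrix.charpoly_of_upperTriangular _ (Matrix.blockTriangular_diagonal d)]
  simp

/-- The multiset of eigenvalues of a (Hermitian) matrix. -/
def spec (A : Mat n) : Multiset ℝ :=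
  if hA : A.IsHermitian then Finset.univ.val.map hA.eigenvalues else 0

lemma spec_of_hermitian {A : Mat n} (hA : A.IsHermitian) :
    spec A = Finset.univ.val.map hA.eigenvalues := dif_pos hA

lemma spectral_real (A : Mat n) (hA : A.IsHermitian) :
    A = (hA.eigenvectorUnitary : Mat n) * Matrix.diagonal hA.eigenvalues *
      star (hA.eigenvectorUnitary : Mat n) := by
  have := hA.spectral_theorem
  simpa [RCLike.ofReal_real_eq_id] using this

lemma conj_isHermitian (V : Matrix.unitaryGroup (Fin n) ℝ) (d : Fin n → ℝ) :
    ((V : Mat n) * Matrix.diagonal d * star (V : Mat n)).IsHermitian := by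
  unfold Matrix.IsHermitian
  simp only [conjTranspose_mul, conjTranspose_conjTranspose, star_eq_conjTranspose,
    diagonal_conjTranspose]
  have : star d = d := by funext i; simp
  rw [this, Matrix.mul_assoc]

lemma charpoly_spec {A : Mat n} (hA : A.IsHermitian) :
    A.charpoly = ((spec A).map (fun a => X - Polynomial.C a)).prod := by
  have hVs : (hA.eigenvectorUnitary : Mat n) * star (hA.eigenvectorUnitary : Mat n) = 1 :=
    Matrix.mem_unitaryGroup_iff.mp (hA.eigenvectorUnitary).2
  conv_lhs => rw [spectral_real A hA]
  rw [charpoly_conj' _ _ _ hVs, charpoly_diagonal', spec_of_hermitian hA, Multiset.map_map,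
    Finset.prod_eq_multiset_prod]
  rfl

lemma spec_eq_of_charpoly {A B : Mat n} (hA : A.IsHermitian) (hB : B.IsHermitian)
    (h : A.charpoly = B.charpoly) : spec A = spec B := by
  rw [charpoly_spec hA, charpoly_spec hB] at h
  have := congrArg Polynomial.roots h
  rwa [Polynomial.roots_multiset_prod_X_sub_C, Polynomial.roots_multiset_prod_X_sub_C] at this

lemma spec_conj (V : Matrix.unitaryGroup (Fin n) ℝ) (d : Fin n → ℝ) :
    spec ((V : Mat n) * Matrix.diagonal d * star (V : Mat n)) =
      Finset.univ.val.map d := by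
  set A := (V : Mat n) * Matrix.diagonal d * star (V : Mat n) with hAdef
  have hA : A.IsHermitian := conj_isHermitian V d
  have hVs : (V : Mat n) * star (V : Mat n) = 1 :=
    Matrix.mem_unitaryGroup_iff.mp V.2
  have h1 : A.charpoly = ∏ i, (X - Polynomial.C (d i)) := by
    rw [hAdef, charpoly_conj' _ _ _ hVs, charpoly_diagonal']
  rw [charpoly_spec hA, Finset.prod_eq_multiset_prod] at h1
  have h2 : ((spec A).map (fun a => X - Polynomial.C a)).prod
      = ((Finset.univ.val.map d).map (fun a => X - Polynomial.C a)).prod := by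
    rw [h1, Multiset.map_map]; rfl
  have := congrArg Polynomial.roots h2
  rwa [Polynomial.roots_multiset_prod_X_sub_C, Polynomial.roots_multiset_prod_X_sub_C] at this

lemma card_spec {A : Mat n} (hA : A.IsHermitian) : Multiset.card (spec A) = n := by
  rw [spec_of_hermitian hA, Multiset.card_map]
  exact Finset.card_fin n

lemma isHermitian_matFun (f : ℝ → ℝ) (A : Mat n) : (matFun f A).IsHermitian := by
  unfold matFun
  split
  · exact conj_isHermitian _ _
  · exact Matrix.isHermitian_zero

lemma spec_matFun {A : Mat n} (hA : A.IsHermitian) (f : ℝ → ℝ) :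
    spec (matFun f A) = (spec A).map f := by
  rw [matFun, dif_pos hA, spec_conj, spec_of_hermitian hA, Multiset.map_map]

lemma trace_matFun {A : Mat n} (hA : A.IsHermitian) (f : ℝ → ℝ) :
    (matFun f A).trace = ((spec A).map f).sum := by
  have hVs : star (hA.eigenvectorUnitary : Mat n) * (hA.eigenvectorUnitary : Mat n) = 1 :=
    Matrix.mem_unitaryGroup_iff'.mp (hA.eigenvectorUnitary).2
  rw [matFun, dif_pos hA, Matrix.trace_mul_cycle, hVs, Matrix.one_mul,
    Matrix.trace_diagonal, spec_of_hermitian hA, Multiset.map_map,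
    Finset.sum_eq_multiset_sum]

lemma matFun_mul_self {A : Mat n} (hA : A.IsHermitian) (f : ℝ → ℝ) :
    matFun f A * matFun f A = matFun (fun x => f x * f x) A := by
  have hVs : star (hA.eigenvectorUnitary : Mat n) * (hA.eigenvectorUnitary : Mat n) = 1 :=
    Matrix.mem_unitaryGroup_iff'.mp (hA.eigenvectorUnitary).2
  rw [matFun, dif_pos hA]
  calc (hA.eigenvectorUnitary : Mat n) * Matrix.diagonal (f ∘ hA.eigenvalues) *
        star (hA.eigenvectorUnitary : Mat n) *
        ((hA.eigenvectorUnitary : Mat n) * Matrix.diagonal (f ∘ hA.eigenvalues) *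
        star (hA.eigenvectorUnitary : Mat n))
      = (hA.eigenvectorUnitary : Mat n) * (Matrix.diagonal (f ∘ hA.eigenvalues) *
        (star (hA.eigenvectorUnitary : Mat n) * (hA.eigenvectorUnitary : Mat n)) *
        Matrix.diagonal (f ∘ hA.eigenvalues)) * star (hA.eigenvectorUnitary : Mat n) := by
        simp only [Matrix.mul_assoc]
    _ = _ := by
        rw [hVs, Matrix.mul_one, Matrix.diagonal_mul_diagonal, matFun, dif_pos hA]
        rfl

lemma transpose_matFun (f : ℝ → ℝ) (A : Mat n) : (matFun f A)ᵀ = matFun f A := by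
  rw [← Matrix.conjTranspose_eq_transpose_of_trivial]
  exact isHermitian_matFun f A

lemma nsq_dev (hn : 0 < n) (X : Mat n) :
    nsq (dev X) = nsq X - X.trace ^ 2 / n := by
  have hn' : (n : ℝ) ≠ 0 := Nat.cast_ne_zero.mpr hn.ne'
  unfold nsq dev
  simp only [transpose_sub, transpose_smul, transpose_one, sub_mul, mul_sub,
    Matrix.smul_mul, Matrix.mul_smul, Matrix.mul_one, Matrix.one_mul, smul_smul,
    trace_sub, trace_smul, trace_transpose, trace_one, smul_eq_mul, Fintype.card_fin]
  field_simp
  ring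

/-- the scalar invariant -/
def qfun (n : ℕ) (m : Multiset ℝ) : ℝ :=
  (m.map (fun μ => Real.log (Real.sqrt μ) ^ 2)).sum -
    ((m.map (fun μ => Real.log (Real.sqrt μ))).sum) ^ 2 / n

lemma key_W (hn : 0 < n) (F : Mat n) :
    nsq (dev (logU F)) = qfun n (spec (Fᵀ * F)) := by
  have hA : (Fᵀ * F).IsHermitian := by
    have := Matrix.isHermitian_conjTranspose_mul_self F
    rwa [Matrix.conjTranspose_eq_transpose_of_trivial] at this
  have hB : (matSqrt (Fᵀ * F)).IsHermitian := isHermitian_matFun _ _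
  have hspecB : spec (matSqrt (Fᵀ * F)) = (spec (Fᵀ * F)).map Real.sqrt :=
    spec_matFun hA _
  have h1 : nsq (logU F) =
      ((spec (Fᵀ * F)).map (fun μ => Real.log (Real.sqrt μ) ^ 2)).sum := by
    rw [nsq, logU, matLog, transpose_matFun, matFun_mul_self hB, trace_matFun hB,
      hspecB, Multiset.map_map]
    congr 1
    apply Multiset.map_congr rfl
    intro x _
    simp [Function.comp, pow_two]
  have h2 : (logU F).trace =
      ((spec (Fᵀ * F)).map (fun μ => Real.log (Real.sqrt μ))).sum := by
    rw [logU, matLog, trace_matFun hB, hspecB, Multiset.map_map]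
    rfl
  rw [nsq_dev hn, h1, h2, qfun]

lemma spec_smul {A : Mat n} (hA : A.IsHermitian) (c : ℝ) :
    spec (c • A) = (spec A).map (fun μ => c * μ) := by
  have h : c • A = (hA.eigenvectorUnitary : Mat n) * Matrix.diagonal (c • hA.eigenvalues) *
      star (hA.eigenvectorUnitary : Mat n) := by
    conv_lhs => rw [spectral_real A hA]
    rw [Matrix.diagonal_smul, ← Matrix.smul_mul, ← Matrix.mul_smul]
  rw [h, spec_conj, spec_of_hermitian hA, Multiset.map_map]
  rfl

lemma eigenvalues_ne_zero {A : Mat n} (hA : A.IsHermitian) (hdet : A.det ≠ 0) (i : Fin n) :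
    hA.eigenvalues i ≠ 0 := by
  have h := hA.det_eq_prod_eigenvalues
  rw [h] at hdet
  intro h0
  apply hdet
  apply Finset.prod_eq_zero (Finset.mem_univ i)
  simpa using h0

lemma unitaryConjInv (V : Matrix.unitaryGroup (Fin n) ℝ) (d : Fin n → ℝ) (hd : ∀ i, d i ≠ 0) :
    ((V : Mat n) * Matrix.diagonal d * star (V : Mat n))⁻¹ =
      (V : Mat n) * Matrix.diagonal (fun i => (d i)⁻¹) * star (V : Mat n) := by
  have hVs : star (V : Mat n) * (V : Mat n) = 1 := Matrix.mem_unitaryGroup_iff'.mp V.2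
  have hVs1 : (V : Mat n) * star (V : Mat n) = 1 := Matrix.mem_unitaryGroup_iff.mp V.2
  apply Matrix.inv_eq_right_inv
  calc (V : Mat n) * Matrix.diagonal d * star (V : Mat n) *
        ((V : Mat n) * Matrix.diagonal (fun i => (d i)⁻¹) * star (V : Mat n))
      = (V : Mat n) * (Matrix.diagonal d *
        (star (V : Mat n) * (V : Mat n)) *
        Matrix.diagonal (fun i => (d i)⁻¹)) * star (V : Mat n) := by
        simp only [Matrix.mul_assoc]
    _ = 1 := by
        rw [hVs, Matrix.mul_one, Matrix.diagonal_mul_diagonal]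
        have : (fun i => d i * (d i)⁻¹) = fun _ => (1 : ℝ) := by
          funext i; exact mul_inv_cancel₀ (hd i)
        rw [this, Matrix.diagonal_one, Matrix.mul_one, hVs1]

lemma spec_inv {A : Mat n} (hA : A.IsHermitian) (hdet : A.det ≠ 0) :
    spec A⁻¹ = (spec A).map (fun μ => μ⁻¹) := by
  have heig := eigenvalues_ne_zero hA hdet
  conv_lhs => rw [spectral_real A hA]
  rw [unitaryConjInv _ _ heig, spec_conj, spec_of_hermitian hA, Multiset.map_map]
  rfl

lemma msum_neg (m : Multiset ℝ) (f : ℝ → ℝ) :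
    (m.map (fun x => -(f x))).sum = -(m.map f).sum := by
  induction m using Multiset.induction_on with
  | empty => simp
  | cons a s ih => simp [ih]; ring

lemma msum_add_const (m : Multiset ℝ) (c : ℝ) (f : ℝ → ℝ) :
    (m.map (fun x => c + f x)).sum = (Multiset.card m : ℝ) * c + (m.map f).sum := by
  induction m using Multiset.induction_on with
  | empty => simp
  | cons a s ih => simp [ih]; ring

lemma msum_add_const_sq (m : Multiset ℝ) (c : ℝ) (f : ℝ → ℝ) :
    (m.map (fun x => (c + f x) ^ 2)).sum =
      (Multiset.card m : ℝ) * c ^ 2 + 2 * c * (m.map f).sum +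
        (m.map (fun x => f x ^ 2)).sum := by
  induction m using Multiset.induction_on with
  | empty => simp
  | cons a s ih => simp [ih]; ring

lemma qfun_inv (m : Multiset ℝ) : qfun n (m.map (fun μ => μ⁻¹)) = qfun n m := by
  unfold qfun
  rw [Multiset.map_map, Multiset.map_map]
  have e1 : ((fun μ => Real.log (Real.sqrt μ) ^ 2) ∘ fun μ => μ⁻¹)
      = fun μ => Real.log (Real.sqrt μ) ^ 2 := by
    funext μ; simp [Function.comp, Real.sqrt_inv, Real.log_inv]
  have e2 : ((fun μ => Real.log (Real.sqrt μ)) ∘ fun μ => μ⁻¹)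
      = fun μ => -(Real.log (Real.sqrt μ)) := by
    funext μ; simp [Function.comp, Real.sqrt_inv, Real.log_inv]
  rw [e1, e2, msum_neg, neg_pow]
  ring

lemma qfun_scale (hn : 0 < n) (m : Multiset ℝ) (hcard : (Multiset.card m : ℝ) = n)
    (hpos : ∀ μ ∈ m, 0 < μ) {a : ℝ} (ha : 0 < a) :
    qfun n (m.map (fun μ => a * a * μ)) = qfun n m := by
  have hn' : (n : ℝ) ≠ 0 := Nat.cast_ne_zero.mpr hn.ne'
  have hlog : ∀ μ ∈ m, Real.log (Real.sqrt (a * a * μ)) =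
      Real.log a + Real.log (Real.sqrt μ) := by
    intro μ hμ
    rw [Real.sqrt_mul (by positivity), Real.sqrt_mul_self ha.le,
      Real.log_mul ha.ne' (Real.sqrt_pos.mpr (hpos μ hμ)).ne']
  unfold qfun
  rw [Multiset.map_map, Multiset.map_map]
  have e1 : m.map ((fun μ => Real.log (Real.sqrt μ) ^ 2) ∘ fun μ => a * a * μ)
      = m.map (fun μ => (Real.log a + Real.log (Real.sqrt μ)) ^ 2) :=
    Multiset.map_congr rfl (fun μ hμ => by simp only [Function.comp_apply]; rw [hlog μ hμ])
  have e2 : m.map ((fun μ => Real.log (Real.sqrt μ)) ∘ fun μ => a * a * μ)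
      = m.map (fun μ => Real.log a + Real.log (Real.sqrt μ)) :=
    Multiset.map_congr rfl (fun μ hμ => by simp only [Function.comp_apply]; rw [hlog μ hμ])
  rw [e1, e2, msum_add_const_sq, msum_add_const, hcard]
  field_simp
  ring

end Aux

/-- Every function of the form `W(F) = Ψ(‖dev_n log U‖²)` (with `U = √(FᵀF)`) is
tension-compression symmetric and isochoric: `W(F⁻¹) = W(F)` and `W(aF) = W(F)` for all
`F ∈ GL⁺(n)` and `a > 0`; in particular `W(F) = W(F / (det F)^{1/n})`. -/
theorem devLog_energy_isochoric_tc_symmetric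
    (n : ℕ) (hn : 2 ≤ n) (Ψ : ℝ → ℝ)
    (W : Mat n → ℝ) (hW : ∀ F : Mat n, W F = Ψ (nsq (dev (logU F)))) :
    ∀ F ∈ GLp n, W F⁻¹ = W F ∧
      (∀ a : ℝ, 0 < a → W (a • F) = W F) ∧
      W ((F.det ^ (1 / (n : ℝ)))⁻¹ • F) = W F := by
  intro F hF
  have hn0 : 0 < n := lt_of_lt_of_le (by norm_num) hn
  have hdet : F.det ≠ 0 := ne_of_gt hF
  have hA : (Fᵀ * F).IsHermitian := by
    have := Matrix.isHermitian_conjTranspose_mul_self F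
    rwa [Matrix.conjTranspose_eq_transpose_of_trivial] at this
  have hA' : (F * Fᵀ).IsHermitian := by
    have := Matrix.isHermitian_mul_conjTranspose_self F
    rwa [Matrix.conjTranspose_eq_transpose_of_trivial] at this
  have hWq : ∀ G : Mat n, W G = Ψ (qfun n (spec (Gᵀ * G))) := fun G => by
    rw [hW G, key_W hn0]
  have hsmul : ∀ a : ℝ, 0 < a → W (a • F) = W F := by
    intro a ha
    rw [hWq (a • F), hWq F]
    congr 1
    have hsm : (a • F)ᵀ * (a • F) = (a * a) • (Fᵀ * F) := by
      rw [Matrix.transpose_smul, smul_mul_smul_comm]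
    rw [hsm, spec_smul hA]
    apply qfun_scale hn0
    · rw [card_spec hA]
    · intro μ hμ
      rw [spec_of_hermitian hA] at hμ
      obtain ⟨i, _, rfl⟩ := Multiset.mem_map.mp hμ
      -- eigenvalues of FᵀF are positive
      have hps : (Fᵀ * F).PosSemidef := by
        have := Matrix.posSemidef_conjTranspose_mul_self F
        rwa [Matrix.conjTranspose_eq_transpose_of_trivial] at this
      have hnonneg : 0 ≤ hA.eigenvalues i := hps.eigenvalues_nonneg i
      have hne : hA.eigenvalues i ≠ 0 := by
        apply eigenvalues_ne_zero hA
        rw [Matrix.det_mul, Matrix.det_transpose]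
        exact mul_ne_zero hdet hdet
      exact lt_of_le_of_ne hnonneg (Ne.symm hne)
    · exact ha
  refine ⟨?_, hsmul, ?_⟩
  · -- tension-compression symmetry
    rw [hWq F⁻¹, hWq F]
    congr 1
    have h1 : (F⁻¹)ᵀ * F⁻¹ = (F * Fᵀ)⁻¹ := by
      rw [Matrix.transpose_nonsing_inv, ← Matrix.mul_inv_rev]
    have hdet' : (F * Fᵀ).det ≠ 0 := by
      rw [Matrix.det_mul, Matrix.det_transpose]
      exact mul_ne_zero hdet hdet
    have h2 : spec (F * Fᵀ) = spec (Fᵀ * F) := by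
      apply spec_eq_of_charpoly hA' hA
      have : Fᵀ * F = F⁻¹ * (F * Fᵀ) * F := by
        rw [Matrix.mul_assoc, Matrix.mul_assoc, ← Matrix.mul_assoc F⁻¹,
          Matrix.nonsing_inv_mul F hdet.isUnit, Matrix.one_mul]
      rw [this]
      exact (charpoly_conj' _ _ _ (Matrix.nonsing_inv_mul F hdet.isUnit)).symm
    rw [h1, spec_inv hA' hdet', h2, qfun_inv]
  · -- isochoric normalization
    exact hsmul _ (inv_pos.mpr (Real.rpow_pos_of_pos hF _))
end
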